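/- Let δ > 0, ρ > 0, L₀ ≥ 1, and L₁ > 0. Then there exists a constant C > 0 with the following property: for every set V ⊂ ℝ such that every interval J ⊂ ℝ of length |J| ≥ L₀ contains at most ρ·|J| points of V, and for all b ≥ 0 and 0 ≤ L ≤ L₁, one has ∫_b^{b+L} ( Σ_{v ∈ V, |v − t| ≤ δ} (1 + t²(v − t)²)^{-1} ) dt ≤ C/(1+b). -/

import Mathlib

open MeasureTheory Set Real

lemma aux_tsum_le (V S : Set ℝ) (hfin : S.Finite) (f : ℝ → ℝ)
    (hf0 : ∀ v, 0 ≤ f v) (t δ : ℝ)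
    (hsub : {v : ℝ | v ∈ V ∧ |v - t| ≤ δ} ⊆ S) :
    (∑' v : {v : ℝ // v ∈ V ∧ |v - t| ≤ δ}, f v) ≤ ∑ v ∈ hfin.toFinset, f v := by
  have h1 : (∑' v : {v : ℝ // v ∈ V ∧ |v - t| ≤ δ}, f v)
      = ∑' v : ℝ, ({v : ℝ | v ∈ V ∧ |v - t| ≤ δ}).indicator f v := tsum_subtype _ f
  have hSsum : Summable (S.indicator f) := by
    apply summable_of_finite_support
    refine hfin.subset (fun v hv => ?_)
    by_contra h
    exact hv (Set.indicator_of_notMem h f)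
  have hle : ∀ v, ({v : ℝ | v ∈ V ∧ |v - t| ≤ δ}).indicator f v ≤ S.indicator f v :=
    indicator_le_indicator_of_subset hsub hf0
  have h2 : (∑' v : ℝ, ({v : ℝ | v ∈ V ∧ |v - t| ≤ δ}).indicator f v)
      ≤ ∑' v : ℝ, S.indicator f v := by
    refine Summable.tsum_le_tsum hle ?_ hSsum
    exact hSsum.of_nonneg_of_le (fun v => Set.indicator_nonneg (fun x _ => hf0 x) v) hle
  have h3 : (∑' v : ℝ, S.indicator f v) = ∑ v ∈ hfin.toFinset, S.indicator f v := by
    refine tsum_eq_sum ?_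
    intro v hv
    simp only [Set.Finite.mem_toFinset] at hv
    exact Set.indicator_of_notMem hv f
  have h4 : ∑ v ∈ hfin.toFinset, S.indicator f v = ∑ v ∈ hfin.toFinset, f v := by
    refine Finset.sum_congr rfl (fun v hv => ?_)
    simp only [Set.Finite.mem_toFinset] at hv
    exact Set.indicator_of_mem hv f
  rw [h1]
  exact h2.trans (le_of_eq (h3.trans h4))

lemma aux_int (c v a b : ℝ) (hc : 0 < c) :
    (∫ t in a..b, (1 + (c * (t - v)) ^ 2)⁻¹) ≤ π / c := by
  rw [intervalIntegral.integral_comp_sub_right (fun u => (1 + (c * u) ^ 2)⁻¹) v]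
  rw [intervalIntegral.integral_comp_mul_left (fun x => (1 + x ^ 2)⁻¹) hc.ne']
  rw [integral_inv_one_add_sq, smul_eq_mul]
  have h1 := Real.arctan_lt_pi_div_two (c * (b - v))
  have h2 := Real.neg_pi_div_two_lt_arctan (c * (a - v))
  rw [div_eq_inv_mul]
  have hc' : (0:ℝ) ≤ c⁻¹ := by positivity
  nlinarith

theorem stmt4 (δ ρ L₀ L₁ : ℝ) (hδ : 0 < δ) (hρ : 0 < ρ) (hL₀ : 1 ≤ L₀) (hL₁ : 0 < L₁) :
    ∃ C > 0, ∀ V : Set ℝ,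
      (∀ x y : ℝ, L₀ ≤ y - x →
        (V ∩ Icc x y).Finite ∧ ((V ∩ Icc x y).ncard : ℝ) ≤ ρ * (y - x)) →
      ∀ b L : ℝ, 0 ≤ b → 0 ≤ L → L ≤ L₁ →
        (∫ t in Icc b (b + L),
            ∑' v : {v : ℝ // v ∈ V ∧ |v - t| ≤ δ},
              (1 + t ^ 2 * ((v : ℝ) - t) ^ 2)⁻¹) ≤ C / (1 + b) := by
  have hπ : (0:ℝ) < π := Real.pi_pos
  set K := L₀ + L₁ + 2*δ with hKdef
  have hKpos : 0 < K := by linarith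
  set N := ρ * K with hNdef
  have hNpos : 0 < N := mul_pos hρ hKpos
  refine ⟨2*N*L₁ + 2*N*π + 1, by positivity, ?_⟩
  intro V hV b L hb hL hLL₁
  have hb1' : (0:ℝ) < 1 + b := by linarith
  obtain ⟨hfin, hcard⟩ := hV (b - δ) (b - δ + K) (by linarith)
  set S := V ∩ Icc (b - δ) (b - δ + K) with hSdef
  have hcard' : (S.ncard : ℝ) ≤ N := by
    have he : (b - δ + K) - (b - δ) = K := by ring
    rw [he] at hcard
    exact hcard
  set F := hfin.toFinset with hFdef
  have hFcard : (F.card : ℝ) ≤ N := by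
    rwa [Set.ncard_eq_toFinset_card _ hfin] at hcard'
  have hsub : ∀ t ∈ Icc b (b+L), {v : ℝ | v ∈ V ∧ |v - t| ≤ δ} ⊆ S := by
    intro t ht v hv
    obtain ⟨hvV, hvd⟩ := hv
    rw [abs_le] at hvd
    obtain ⟨ht1, ht2⟩ := ht
    exact ⟨hvV, by constructor <;> [linarith; linarith]⟩
  have key1 : ∀ t ∈ Icc b (b+L),
      (∑' v : {v : ℝ // v ∈ V ∧ |v - t| ≤ δ}, (1 + t ^ 2 * ((v : ℝ) - t) ^ 2)⁻¹)
        ≤ ∑ v ∈ F, (1 + t ^ 2 * (v - t) ^ 2)⁻¹ := fun t ht =>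
    aux_tsum_le V S hfin (fun v => (1 + t ^ 2 * (v - t) ^ 2)⁻¹)
      (fun v => by positivity) t δ (hsub t ht)
  have hnn : 0 ≤ᵐ[volume.restrict (Icc b (b+L))]
      fun t => ∑' v : {v : ℝ // v ∈ V ∧ |v - t| ≤ δ}, (1 + t ^ 2 * ((v : ℝ) - t) ^ 2)⁻¹ := by
    filter_upwards with t
    exact tsum_nonneg (fun v => by positivity)
  rcases le_or_gt b 1 with hb1 | hb1
  · -- small b : bound by constant N
    have hpt : ∀ t ∈ Icc b (b+L),
        (∑' v : {v : ℝ // v ∈ V ∧ |v - t| ≤ δ}, (1 + t ^ 2 * ((v : ℝ) - t) ^ 2)⁻¹) ≤ N := by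
      intro t ht
      refine (key1 t ht).trans ?_
      calc ∑ v ∈ F, (1 + t ^ 2 * (v - t) ^ 2)⁻¹ ≤ ∑ v ∈ F, 1 := by
            refine Finset.sum_le_sum (fun v _ => ?_)
            rw [inv_le_one_iff₀]
            right; nlinarith [sq_nonneg t, sq_nonneg (v - t), sq_nonneg (t * (v - t))]
        _ = (F.card : ℝ) := by simp
        _ ≤ N := hFcard
    have hI : (∫ t in Icc b (b + L),
          ∑' v : {v : ℝ // v ∈ V ∧ |v - t| ≤ δ}, (1 + t ^ 2 * ((v : ℝ) - t) ^ 2)⁻¹)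
        ≤ ∫ _t in Icc b (b + L), N := by
      refine integral_mono_of_nonneg hnn ?_ ?_
      · exact integrableOn_const measure_Icc_lt_top.ne
      · filter_upwards [ae_restrict_mem measurableSet_Icc] with t ht using hpt t ht
    have hIc : (∫ _t in Icc b (b + L), N) = L * N := by
      rw [setIntegral_const, Measure.real, Real.volume_Icc, smul_eq_mul]
      congr 1
      rw [show b + L - b = L by ring, ENNReal.toReal_ofReal hL]
    rw [le_div_iff₀ hb1']
    calc (∫ t in Icc b (b + L),
          ∑' v : {v : ℝ // v ∈ V ∧ |v - t| ≤ δ}, (1 + t ^ 2 * ((v : ℝ) - t) ^ 2)⁻¹) * (1 + b)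
        ≤ (L * N) * (1 + b) := by
          refine mul_le_mul_of_nonneg_right (hI.trans hIc.le) hb1'.le
      _ ≤ 2*N*L₁ + 2*N*π + 1 := by nlinarith [mul_nonneg hL hNpos.le, mul_nonneg hNpos.le hL₁.le]
  · -- large b : use decay
    have hbpos : 0 < b := by linarith
    have hkey2 : ∀ t ∈ Icc b (b+L),
        (∑' v : {v : ℝ // v ∈ V ∧ |v - t| ≤ δ}, (1 + t ^ 2 * ((v : ℝ) - t) ^ 2)⁻¹)
          ≤ ∑ v ∈ F, (1 + (b * (t - v)) ^ 2)⁻¹ := by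
      intro t ht
      refine (key1 t ht).trans (Finset.sum_le_sum (fun v _ => ?_))
      have htb : b ≤ t := ht.1
      have hsq : b^2 ≤ t^2 := by nlinarith
      refine inv_anti₀ (by positivity) ?_
      nlinarith [mul_nonneg (sub_nonneg.2 hsq) (sq_nonneg (t - v))]
    have hgc : Continuous fun t => ∑ v ∈ F, (1 + (b * (t - v)) ^ 2)⁻¹ := by
      refine continuous_finset_sum _ (fun v _ => ?_)
      refine Continuous.inv₀ (by fun_prop) (fun t => by positivity)
    have hI : (∫ t in Icc b (b + L),
          ∑' v : {v : ℝ // v ∈ V ∧ |v - t| ≤ δ}, (1 + t ^ 2 * ((v : ℝ) - t) ^ 2)⁻¹)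
        ≤ ∫ t in Icc b (b + L), ∑ v ∈ F, (1 + (b * (t - v)) ^ 2)⁻¹ := by
      refine integral_mono_of_nonneg hnn (hgc.integrableOn_Icc) ?_
      filter_upwards [ae_restrict_mem measurableSet_Icc] with t ht using hkey2 t ht
    have hswap : (∫ t in Icc b (b + L), ∑ v ∈ F, (1 + (b * (t - v)) ^ 2)⁻¹)
        = ∑ v ∈ F, ∫ t in Icc b (b + L), (1 + (b * (t - v)) ^ 2)⁻¹ := by
      refine integral_finset_sum F (fun v _ => ?_)
      refine Continuous.integrableOn_Icc ?_
      refine Continuous.inv₀ (by fun_prop) (fun t => by positivity)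
    have heach : ∀ v : ℝ, (∫ t in Icc b (b + L), (1 + (b * (t - v)) ^ 2)⁻¹) ≤ π / b := by
      intro v
      rw [MeasureTheory.integral_Icc_eq_integral_Ioc,
        ← intervalIntegral.integral_of_le (by linarith : b ≤ b + L)]
      exact aux_int b v b (b + L) hbpos
    have hsum : (∑ v ∈ F, ∫ t in Icc b (b + L), (1 + (b * (t - v)) ^ 2)⁻¹)
        ≤ N * (π / b) := by
      calc (∑ v ∈ F, ∫ t in Icc b (b + L), (1 + (b * (t - v)) ^ 2)⁻¹)
          ≤ ∑ _v ∈ F, π / b := Finset.sum_le_sum (fun v _ => heach v)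
        _ = (F.card : ℝ) * (π / b) := by rw [Finset.sum_const, nsmul_eq_mul]
        _ ≤ N * (π / b) := by
            refine mul_le_mul_of_nonneg_right hFcard (by positivity)
    have hfinal : N * (π / b) ≤ (2*N*L₁ + 2*N*π + 1) / (1 + b) := by
      rw [← mul_div_assoc, div_le_div_iff₀ hbpos hb1']
      nlinarith [mul_pos hNpos hπ, mul_nonneg (mul_nonneg hNpos.le hπ.le) hbpos.le,
        mul_nonneg (mul_nonneg hNpos.le hL₁.le) hbpos.le]
    calc _ ≤ ∑ v ∈ F, ∫ t in Icc b (b + L), (1 + (b * (t - v)) ^ 2)⁻¹ := hI.trans hswap.le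
      _ ≤ N * (π / b) := hsum
      _ ≤ _ := hfinal
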